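/- For convex J with minimizer u*, solutions of the Nesterov ODE ü + (3/t)u̇ + ∇J(u) = 0 satisfy J(u(t)) - J(u*) ≤ 2‖u(0⁺) - u*‖²/t², where the Lyapunov function E(t) = t²(J(u(t)) - J(u*)) + 2‖u(t) + (t/2)u̇(t) - u*‖² is non-increasing in t. -/

import Mathlib

open Set Filter
open scoped Topology RealInnerProductSpace

lemma grad_convex_ineq {d : ℕ} {J : EuclideanSpace ℝ (Fin d) → ℝ} (hJ : ContDiff ℝ 1 J)
    (hconv : ConvexOn ℝ Set.univ J) (x y : EuclideanSpace ℝ (Fin d)) :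
    J y - J x ≤ ⟪gradient J y, y - x⟫ := by
  set c : ℝ → EuclideanSpace ℝ (Fin d) := fun s => y + s • (x - y) with hc
  have hphi : ∀ s : ℝ, HasDerivAt (fun s => J (c s)) ⟪gradient J (c s), x - y⟫ s := by
    intro s
    have hcd : HasDerivAt c (x - y) s := by
      simpa [hc] using ((hasDerivAt_id s).smul_const (x - y)).const_add y
    have hfd : HasFDerivAt J (fderiv ℝ J (c s)) (c s) :=
      (hJ.differentiable one_ne_zero (c s)).hasFDerivAt
    have := hfd.comp_hasDerivAt s hcd
    refine this.congr_deriv ?_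
    rw [← toDual_gradient]
    simp
  have hphiconv : ConvexOn ℝ Set.univ (fun s : ℝ => J (c s)) := by
    have := hconv.comp_affineMap
      (AffineMap.lineMap y x : ℝ →ᵃ[ℝ] EuclideanSpace ℝ (Fin d))
    have he : (fun s : ℝ => J (c s)) = J ∘ (AffineMap.lineMap y x) := by
      funext s
      simp [hc, AffineMap.lineMap_apply, Function.comp]
      rw [add_comm]
    rw [he]
    simpa using this
  have hd0 : HasDerivAt (fun s => J (c s)) ⟪gradient J y, x - y⟫ 0 := by
    have := hphi 0
    simpa [hc] using this
  have hslope : Tendsto (slope (fun s => J (c s)) 0) (𝓝[>] 0)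
      (𝓝 ⟪gradient J y, x - y⟫) :=
    (hasDerivAt_iff_tendsto_slope.1 hd0).mono_left
      (nhdsWithin_mono 0 (fun s hs => ne_of_gt hs))
  have hev : ∀ᶠ s in 𝓝[>] (0:ℝ), slope (fun s => J (c s)) 0 s ≤ J (c 1) - J (c 0) := by
    filter_upwards [Ioo_mem_nhdsGT_of_mem (by norm_num : (0:ℝ) ∈ Ico 0 1)] with s hs
    have := hphiconv.secant_mono (a := 0) (x := s) (y := 1) trivial trivial trivial
      (ne_of_gt hs.1) one_ne_zero hs.2.le
    simpa [slope_def_field] using this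
  have hle : ⟪gradient J y, x - y⟫ ≤ J (c 1) - J (c 0) :=
    le_of_tendsto hslope hev
  have hc0 : c 0 = y := by simp [hc]
  have hc1 : c 1 = x := by simp [hc]
  rw [hc0, hc1] at hle
  have : ⟪gradient J y, y - x⟫ = - ⟪gradient J y, x - y⟫ := by
    rw [← inner_neg_right, neg_sub]
  linarith [hle, this.ge, this.le]

/-- Su–Boyd–Candès convergence rate for the Nesterov ODE: for convex `J` with minimizer `u*`,
the Lyapunov function `E(t) = t²(J(u(t)) - J(u*)) + 2‖u(t) + (t/2)u̇(t) - u*‖²` is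
non-increasing, and `J(u(t)) - J(u*) ≤ 2‖u(0⁺) - u*‖²/t²`. -/
theorem nesterov_ode_convergence_rate {d : ℕ}
    (J : EuclideanSpace ℝ (Fin d) → ℝ) (hJ : ContDiff ℝ 1 J)
    (hconv : ConvexOn ℝ Set.univ J)
    (ustar : EuclideanSpace ℝ (Fin d)) (hmin : ∀ x, J ustar ≤ J x)
    (u u' u'' : ℝ → EuclideanSpace ℝ (Fin d))
    (hu : ∀ t ∈ Ioi (0 : ℝ), HasDerivAt u (u' t) t)
    (hu' : ∀ t ∈ Ioi (0 : ℝ), HasDerivAt u' (u'' t) t)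
    (hode : ∀ t ∈ Ioi (0 : ℝ), u'' t + (3 / t) • u' t + gradient J (u t) = 0)
    (u₀ : EuclideanSpace ℝ (Fin d))
    (hlim : Tendsto u (𝓝[>] 0) (𝓝 u₀))
    (hlim' : Tendsto (fun t => t • u' t) (𝓝[>] 0) (𝓝 0)) :
    AntitoneOn (fun t => t ^ 2 * (J (u t) - J ustar) +
      2 * ‖u t + (t / 2) • u' t - ustar‖ ^ 2) (Ioi (0 : ℝ)) ∧
    ∀ t ∈ Ioi (0 : ℝ), J (u t) - J ustar ≤ 2 * ‖u₀ - ustar‖ ^ 2 / t ^ 2 := by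
  set E : ℝ → ℝ := fun t => t ^ 2 * (J (u t) - J ustar) +
      2 * ‖u t + (t / 2) • u' t - ustar‖ ^ 2 with hE
  set v : ℝ → EuclideanSpace ℝ (Fin d) := fun t => u t + (t / 2) • u' t - ustar with hv
  -- derivative of E
  have hEderiv : ∀ t ∈ Ioi (0 : ℝ), HasDerivAt E
      (2 * t * ((J (u t) - J ustar) - ⟪gradient J (u t), u t - ustar⟫)) t := by
    intro t ht
    have htpos : (0:ℝ) < t := ht
    have htne : t ≠ 0 := ne_of_gt htpos
    -- derivative of J ∘ u
    have hJu : HasDerivAt (fun s => J (u s)) ⟪gradient J (u t), u' t⟫ t := by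
      have hfd : HasFDerivAt J (fderiv ℝ J (u t)) (u t) :=
        (hJ.differentiable one_ne_zero (u t)).hasFDerivAt
      have := hfd.comp_hasDerivAt t (hu t ht)
      refine this.congr_deriv ?_
      rw [← toDual_gradient]; simp
    have h1 : HasDerivAt (fun s => s ^ 2 * (J (u s) - J ustar))
        (2 * t * (J (u t) - J ustar) + t ^ 2 * ⟪gradient J (u t), u' t⟫) t := by
      have := (hasDerivAt_pow 2 t).mul (hJu.sub_const (J ustar))
      refine this.congr_deriv ?_
      ring
    -- derivative of v
    have hvd : HasDerivAt v (u' t + ((t / 2) • u'' t + (1/2 : ℝ) • u' t)) t := by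
      have hsm := HasDerivAt.smul ((hasDerivAt_id t).div_const 2) (hu' t ht)
      simpa [hv] using ((hu t ht).add hsm).sub_const ustar
    -- use the ODE to simplify v'
    have hode' : u'' t = -((3 / t) • u' t + gradient J (u t)) := by
      have h := hode t ht
      rw [add_assoc] at h
      exact eq_neg_of_add_eq_zero_left h
    have hsm2 : (t / 2) • ((3 / t) • u' t) = (3/2 : ℝ) • u' t := by
      rw [smul_smul]
      congr 1
      field_simp
    have hveq : u' t + ((t / 2) • u'' t + (1/2 : ℝ) • u' t)
        = (-(t / 2)) • gradient J (u t) := by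
      rw [hode', smul_neg, smul_add, hsm2]
      module
    have hvd' : HasDerivAt v ((-(t / 2)) • gradient J (u t)) t := hveq ▸ hvd
    have h2 : HasDerivAt (fun s => 2 * ‖v s‖ ^ 2)
        (2 * (2 * ⟪v t, (-(t / 2)) • gradient J (u t)⟫)) t :=
      hvd'.norm_sq.const_mul 2
    have hEd : HasDerivAt E
        ((2 * t * (J (u t) - J ustar) + t ^ 2 * ⟪gradient J (u t), u' t⟫) +
          2 * (2 * ⟪v t, (-(t / 2)) • gradient J (u t)⟫)) t := h1.add h2
    convert hEd using 1
    have hvsplit : v t = (u t - ustar) + (t / 2) • u' t := by rw [hv]; abel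
    rw [hvsplit, real_inner_smul_right, inner_add_left, real_inner_smul_left,
      real_inner_comm (u t - ustar), real_inner_comm (u' t)]
    ring
  -- E is antitone
  have hanti : AntitoneOn E (Ioi (0 : ℝ)) := by
    refine antitoneOn_of_hasDerivWithinAt_nonpos (convex_Ioi 0)
      (fun t ht => (hEderiv t ht).continuousAt.continuousWithinAt)
      (f' := fun t => 2 * t * ((J (u t) - J ustar) - ⟪gradient J (u t), u t - ustar⟫))
      ?_ ?_
    · intro t ht
      rw [interior_Ioi] at ht
      exact ((hEderiv t ht).hasDerivWithinAt).mono (by rw [interior_Ioi])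
    · intro t ht
      rw [interior_Ioi] at ht
      have htpos : (0:ℝ) < t := ht
      have hgi := grad_convex_ineq hJ hconv ustar (u t)
      show 2 * t * ((J (u t) - J ustar) - ⟪gradient J (u t), u t - ustar⟫) ≤ 0
      nlinarith [hgi]
  refine ⟨hanti, ?_⟩
  -- limit of E at 0⁺
  have hElim : Tendsto E (𝓝[>] 0) (𝓝 (2 * ‖u₀ - ustar‖ ^ 2)) := by
    have h1 : Tendsto (fun s : ℝ => s ^ 2 * (J (u s) - J ustar)) (𝓝[>] 0) (𝓝 0) := by
      have ha : Tendsto (fun s : ℝ => s ^ 2) (𝓝[>] (0:ℝ)) (𝓝 0) := by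
        have h := ((continuous_pow 2).tendsto (0:ℝ)).mono_left
          (nhdsWithin_le_nhds (s := Ioi (0:ℝ)))
        simpa using h
      have hb : Tendsto (fun s : ℝ => J (u s) - J ustar) (𝓝[>] 0)
          (𝓝 (J u₀ - J ustar)) :=
        ((hJ.continuous.tendsto u₀).comp hlim).sub tendsto_const_nhds
      simpa using ha.mul hb
    have h2 : Tendsto (fun s : ℝ => 2 * ‖v s‖ ^ 2) (𝓝[>] 0)
        (𝓝 (2 * ‖u₀ - ustar‖ ^ 2)) := by
      have hvlim : Tendsto v (𝓝[>] 0) (𝓝 (u₀ - ustar)) := by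
        have hs : Tendsto (fun s : ℝ => (s / 2) • u' s) (𝓝[>] 0) (𝓝 0) := by
          have : (fun s : ℝ => (s / 2) • u' s) = fun s => (1/2 : ℝ) • (s • u' s) := by
            funext s; rw [smul_smul]; congr 1; ring
          rw [this]
          simpa using hlim'.const_smul (1/2 : ℝ)
        have := (hlim.add hs).sub_const ustar
        simpa using this
      have : Tendsto (fun s => ‖v s‖ ^ 2) (𝓝[>] 0) (𝓝 (‖u₀ - ustar‖ ^ 2)) :=
        ((continuous_norm.tendsto _).comp hvlim).pow 2
      simpa using this.const_mul 2
    have := h1.add h2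
    simpa using this
  intro t ht
  have htpos : (0:ℝ) < t := ht
  have hEt : E t ≤ 2 * ‖u₀ - ustar‖ ^ 2 := by
    apply ge_of_tendsto hElim
    filter_upwards [Ioo_mem_nhdsGT_of_mem (⟨le_rfl, htpos⟩ : (0:ℝ) ∈ Ico 0 t)]
      with s hs
    exact hanti hs.1 ht hs.2.le
  have hnn : 0 ≤ 2 * ‖v t‖ ^ 2 := by positivity
  have : t ^ 2 * (J (u t) - J ustar) ≤ 2 * ‖u₀ - ustar‖ ^ 2 := by
    have : E t = t ^ 2 * (J (u t) - J ustar) + 2 * ‖v t‖ ^ 2 := rfl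
    linarith [hEt, hnn, this.le, this.ge]
  rw [le_div_iff₀ (by positivity : (0:ℝ) < t ^ 2)]
  linarith
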